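/- Let ε > 0 and δ > 0. There exists d₀ such that for every d ≥ d₀, every finite d-regular simple graph G, every vertex v ∈ V(G), and every p with (1+ε)/d ≤ p ≤ 1, the probability that the connected component of v in G_p has order at least d^{1/2} is at least y(ε) − δ. -/

import Mathlib

open Finset

variable {V : Type*}

/-- The number of neighbours of `v` in `G`. -/
noncomputable def degAt (G : SimpleGraph V) (v : V) : ℕ := {w | G.Adj v w}.ncard

/-- `G` is `d`-regular. -/
def IsRegOfDeg (G : SimpleGraph V) (d : ℕ) : Prop := ∀ v, degAt G v = d

/-- The order (number of vertices) of the connected component of `v` in `H`. -/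
noncomputable def compCard (H : SimpleGraph V) (v : V) : ℕ := {w | H.Reachable v w}.ncard

/-- The order of the largest connected component of `H`. -/
noncomputable def maxCompCard [Fintype V] (H : SimpleGraph V) : ℕ :=
  Finset.univ.sup (compCard H)

/-- The edge set of `G` as a `Finset`. -/
noncomputable def edgeFins (G : SimpleGraph V) [Fintype V] : Finset (Sym2 V) :=
  G.edgeSet.toFinite.toFinset

open Classical in
/-- The probability of the event `A` under bond percolation on `G` with retention
probability `p`: each edge of `G` is retained independently with probability `p`. -/
noncomputable def percProb [Fintype V] (G : SimpleGraph V) (p : ℝ)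
    (A : SimpleGraph V → Prop) : ℝ :=
  ∑ F ∈ (edgeFins G).powerset,
    if A (SimpleGraph.fromEdgeSet (↑F)) then
      p ^ F.card * (1 - p) ^ ((edgeFins G).card - F.card) else 0

open Classical in
/-- Percolation expectation of an ℝ-valued observable. -/
noncomputable def percExp [Fintype V] (G : SimpleGraph V) (p : ℝ)
    (X : SimpleGraph V → ℝ) : ℝ :=
  ∑ F ∈ (edgeFins G).powerset,
    p ^ F.card * (1 - p) ^ ((edgeFins G).card - F.card) *
      X (SimpleGraph.fromEdgeSet (↑F))

open Classical in
/-- The probability of the event `A` under three independent bond percolations on `G`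
with retention probabilities `p₁, p₂, p₃`. -/
noncomputable def percProb3 [Fintype V] (G : SimpleGraph V) (p₁ p₂ p₃ : ℝ)
    (A : SimpleGraph V → SimpleGraph V → SimpleGraph V → Prop) : ℝ :=
  ∑ F₁ ∈ (edgeFins G).powerset, ∑ F₂ ∈ (edgeFins G).powerset, ∑ F₃ ∈ (edgeFins G).powerset,
    if A (SimpleGraph.fromEdgeSet (↑F₁)) (SimpleGraph.fromEdgeSet (↑F₂))
        (SimpleGraph.fromEdgeSet (↑F₃)) then
      (p₁ ^ F₁.card * (1 - p₁) ^ ((edgeFins G).card - F₁.card)) *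
      (p₂ ^ F₂.card * (1 - p₂) ^ ((edgeFins G).card - F₂.card)) *
      (p₃ ^ F₃.card * (1 - p₃) ^ ((edgeFins G).card - F₃.card))
    else 0

/-- The Cartesian product of the graphs `Gs i`, `i : Fin t`. -/
def prodGraph {t : ℕ} {V : Fin t → Type*} (Gs : ∀ i, SimpleGraph (V i)) :
    SimpleGraph (∀ i, V i) where
  Adj u v := ∃ i, (Gs i).Adj (u i) (v i) ∧ ∀ j, j ≠ i → u j = v j
  symm := ⟨by
    rintro u v ⟨i, hadj, h⟩
    exact ⟨i, hadj.symm, fun j hj => (h j hj).symm⟩⟩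
  loopless := ⟨by
    rintro u ⟨i, hadj, -⟩
    exact (Gs i).ne_of_adj hadj rfl⟩

/-- Binomial(m,p) point mass at s. -/
noncomputable def gwB (p : ℝ) (m s : ℕ) : ℝ := (m.choose s : ℝ) * p ^ s * (1 - p) ^ (m - s)

/-- Survival-probability lower-bound recursion: `rho p m r a` is the probability that a
branching exploration with `a` active vertices and Bin(m,p) offspring discovers at least
`r` further vertices. -/
noncomputable def rho (p : ℝ) (m : ℕ) : ℕ → ℕ → ℝ
  | 0, _ => 1
  | _ + 1, 0 => 0
  | r + 1, a + 1 =>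
      ∑ s ∈ (Finset.range (m + 1)).attach, gwB p m s * rho p m (r + 1 - s) (a + s)
termination_by r a => (r, a)
decreasing_by
  rcases Nat.eq_zero_or_pos s.1 with h | h
  · simp only [h, Nat.sub_zero, Nat.add_zero]
    exact Prod.Lex.right _ (by omega)
  · exact Prod.Lex.left _ _ (by omega)

theorem rho_succ_succ (p : ℝ) (m r a : ℕ) :
    rho p m (r + 1) (a + 1) = ∑ s ∈ Finset.range (m + 1), gwB p m s * rho p m (r + 1 - s) (a + s) := by
  rw [rho, ← Finset.sum_attach (Finset.range (m+1)) (fun s => gwB p m s * rho p m (r + 1 - s) (a + s))]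

/-- Custom induction principle matching the recursion of `rho`. -/
theorem rhoInd (P : ℕ → ℕ → Prop) (h0 : ∀ a, P 0 a) (h1 : ∀ r, P (r + 1) 0)
    (h2 : ∀ r a, (∀ s : ℕ, P (r + 1 - s) (a + s)) → P (r + 1) (a + 1)) : ∀ r a, P r a := by
  intro r
  induction r using Nat.strong_induction_on with
  | _ r ihr =>
    intro a
    induction a with
    | zero =>
      cases r with
      | zero => exact h0 0
      | succ r => exact h1 r
    | succ a iha =>
      cases r with
      | zero => exact h0 _
      | succ r =>
        apply h2
        intro s
        cases s with
        | zero => simpa using iha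
        | succ s =>
          have : r + 1 - (s + 1) < r + 1 := by omega
          exact ihr _ this _

variable {p : ℝ} {m : ℕ}

theorem gwB_nonneg (hp0 : 0 ≤ p) (hp1 : p ≤ 1) (s : ℕ) : 0 ≤ gwB p m s := by
  have h1 : (0:ℝ) ≤ 1 - p := by linarith
  unfold gwB
  positivity

theorem gwB_sum : ∑ s ∈ Finset.range (m + 1), gwB p m s = 1 := by
  calc ∑ s ∈ Finset.range (m + 1), gwB p m s
      = ∑ s ∈ Finset.range (m + 1), p ^ s * (1 - p) ^ (m - s) * (m.choose s : ℝ) := by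
        apply Finset.sum_congr rfl; intro s _; unfold gwB; ring
    _ = (p + (1 - p)) ^ m := (add_pow p (1 - p) m).symm
    _ = 1 := by norm_num

/-- Weighted average form: `∑ gwB * z^s = (1 - p + p z)^m`. -/
theorem gwB_sum_pow (z : ℝ) :
    ∑ s ∈ Finset.range (m + 1), gwB p m s * z ^ s = (1 - p + p * z) ^ m := by
  calc ∑ s ∈ Finset.range (m + 1), gwB p m s * z ^ s
      = ∑ s ∈ Finset.range (m + 1), (p * z) ^ s * (1 - p) ^ (m - s) * (m.choose s : ℝ) := by
        apply Finset.sum_congr rfl; intro s _; unfold gwB; rw [mul_pow]; ring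
    _ = (p * z + (1 - p)) ^ m := (add_pow (p * z) (1 - p) m).symm
    _ = (1 - p + p * z) ^ m := by ring_nf

theorem rho_nonneg (hp0 : 0 ≤ p) (hp1 : p ≤ 1) : ∀ r a, 0 ≤ rho p m r a := by
  refine rhoInd _ (fun a => by simp [rho]) (fun r => by simp [rho]) (fun r a ih => ?_)
  rw [rho_succ_succ]
  exact Finset.sum_nonneg fun s _ => mul_nonneg (gwB_nonneg hp0 hp1 s) (ih s)

theorem rho_le_one (hp0 : 0 ≤ p) (hp1 : p ≤ 1) : ∀ r a, rho p m r a ≤ 1 := by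
  refine rhoInd _ (fun a => by simp [rho]) (fun r => by simp [rho]) (fun r a ih => ?_)
  rw [rho_succ_succ]
  calc ∑ s ∈ Finset.range (m + 1), gwB p m s * rho p m (r + 1 - s) (a + s)
      ≤ ∑ s ∈ Finset.range (m + 1), gwB p m s := by
        apply Finset.sum_le_sum
        intro s _
        nth_rewrite 2 [← mul_one (gwB p m s)]
        exact mul_le_mul_of_nonneg_left (ih s) (gwB_nonneg hp0 hp1 s)
    _ = 1 := gwB_sum

/-- One extra discovered-and-active vertex helps. -/
theorem rho_shift (hp0 : 0 ≤ p) (hp1 : p ≤ 1) :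
    ∀ r a, rho p m (r + 1) a ≤ rho p m r (a + 1) := by
  refine rhoInd (fun r a => rho p m (r + 1) a ≤ rho p m r (a + 1)) (fun a => ?_) (fun r => ?_)
    (fun r a ih => ?_)
  · simpa [rho] using rho_le_one hp0 hp1 1 a
  · simpa [rho] using rho_nonneg hp0 hp1 (r + 1) 1
  · rw [rho_succ_succ, show a + 1 + 1 = (a + 1) + 1 from rfl, rho_succ_succ]
    apply Finset.sum_le_sum
    intro s _
    apply mul_le_mul_of_nonneg_left _ (gwB_nonneg hp0 hp1 s)
    rcases Nat.lt_or_ge s (r + 2) with h | h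
    · have h1 : r + 1 + 1 - s = (r + 1 - s) + 1 := by omega
      have h2 : a + 1 + s = (a + s) + 1 := by omega
      rw [h1, h2]
      exact ih s
    · have h1 : r + 1 + 1 - s = 0 := by omega
      have h2 : r + 1 - s = 0 := by omega
      rw [h1, h2]
      simp [rho]

theorem rho_sub_shift (hp0 : 0 ≤ p) (hp1 : p ≤ 1) (r b : ℕ) :
    ∀ j s, j ≤ s → rho p m (r - j) (b + j) ≤ rho p m (r - s) (b + s) := by
  intro j s hjs
  induction s, hjs using Nat.le_induction with
  | base => exact le_refl _
  | succ s hjs ih =>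
    refine le_trans ih ?_
    rcases Nat.eq_zero_or_pos (r - s) with h | h
    · have h2 : r - (s + 1) = 0 := by omega
      rw [h, h2]
      simp [rho]
    · have h2 : r - s = (r - (s + 1)) + 1 := by omega
      rw [h2, show b + (s + 1) = (b + s) + 1 from rfl]
      exact rho_shift hp0 hp1 _ _

/-- Tail bound: `1 - rho r a ≤ z ^ a` whenever `z` super-solves the pgf fixed point. -/
theorem rho_tail (hp0 : 0 ≤ p) (hp1 : p ≤ 1) {z : ℝ} (hz0 : 0 ≤ z) (hz1 : z ≤ 1)
    (hz : (1 - p + p * z) ^ m ≤ z) : ∀ r a, 1 - rho p m r a ≤ z ^ a := by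
  refine rhoInd (fun r a => 1 - rho p m r a ≤ z ^ a) (fun a => ?_) (fun r => ?_)
    (fun r a ih => ?_)
  · simp only [rho, sub_self]; positivity
  · simp [rho]
  · rw [rho_succ_succ]
    have key : 1 - ∑ s ∈ Finset.range (m + 1), gwB p m s * rho p m (r + 1 - s) (a + s)
        = ∑ s ∈ Finset.range (m + 1), gwB p m s * (1 - rho p m (r + 1 - s) (a + s)) := by
      simp only [mul_sub, mul_one, Finset.sum_sub_distrib, gwB_sum]
    rw [key]
    calc ∑ s ∈ Finset.range (m + 1), gwB p m s * (1 - rho p m (r + 1 - s) (a + s))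
        ≤ ∑ s ∈ Finset.range (m + 1), gwB p m s * (z ^ s * z ^ a) := by
          apply Finset.sum_le_sum
          intro s _
          apply mul_le_mul_of_nonneg_left _ (gwB_nonneg hp0 hp1 s)
          rw [← pow_add]
          rw [show s + a = a + s by omega]
          exact ih s
      _ = (∑ s ∈ Finset.range (m + 1), gwB p m s * z ^ s) * z ^ a := by
          rw [Finset.sum_mul]
          apply Finset.sum_congr rfl
          intro s _
          ring
      _ = (1 - p + p * z) ^ m * z ^ a := by rw [gwB_sum_pow]
      _ ≤ z * z ^ a := by
          apply mul_le_mul_of_nonneg_right hz (by positivity)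
      _ = z ^ (a + 1) := by ring


section Meas

variable {β : Type*} [DecidableEq β]

/-- Bernoulli(p) product weight of a configuration `F` inside a ground set of size `n`. -/
noncomputable def bw (p : ℝ) (n : ℕ) (F : Finset β) : ℝ := p ^ F.card * (1 - p) ^ (n - F.card)

theorem bw_nonneg {p : ℝ} (hp0 : 0 ≤ p) (hp1 : p ≤ 1) (n : ℕ) (F : Finset β) :
    0 ≤ bw p n F := by
  have h1 : (0:ℝ) ≤ 1 - p := by linarith
  unfold bw; positivity

/-- Group a card-dependent observable into binomial terms. -/
theorem sum_bw_card (p : ℝ) (T : Finset β) (g : ℕ → ℝ) :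
    ∑ F ∈ T.powerset, bw p T.card F * g F.card
      = ∑ j ∈ Finset.range (T.card + 1), gwB p T.card j * g j := by
  have h := Finset.sum_powerset_apply_card
    (fun j => p ^ j * (1 - p) ^ (T.card - j) * g j) (x := T)
  calc ∑ F ∈ T.powerset, bw p T.card F * g F.card
      = ∑ F ∈ T.powerset, (fun j => p ^ j * (1 - p) ^ (T.card - j) * g j) F.card := rfl
    _ = ∑ j ∈ Finset.range (T.card + 1),
          T.card.choose j • (p ^ j * (1 - p) ^ (T.card - j) * g j) := h
    _ = ∑ j ∈ Finset.range (T.card + 1), gwB p T.card j * g j := by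
        apply Finset.sum_congr rfl
        intro j _
        rw [nsmul_eq_mul]
        unfold gwB
        ring

theorem sum_bw (p : ℝ) (E : Finset β) : ∑ F ∈ E.powerset, bw p E.card F = 1 := by
  have h := sum_bw_card p E (fun _ => 1)
  simp only [mul_one] at h
  rw [h, gwB_sum]

/-- Product decomposition of a sum over the powerset of a disjoint union. -/
theorem sum_powerset_disjUnion (s t : Finset β) (hst : Disjoint s t) (g : Finset β → ℝ) :
    ∑ F ∈ (s ∪ t).powerset, g F
      = ∑ F₁ ∈ s.powerset, ∑ F₂ ∈ t.powerset, g (F₁ ∪ F₂) := by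
  rw [← Finset.sum_product']
  apply Finset.sum_nbij' (fun F => (F ∩ s, F ∩ t)) (fun q => q.1 ∪ q.2)
  · intro F hF
    rw [Finset.mem_powerset] at hF
    rw [Finset.mem_product, Finset.mem_powerset, Finset.mem_powerset]
    exact ⟨Finset.inter_subset_right, Finset.inter_subset_right⟩
  · intro q hq
    rw [Finset.mem_product, Finset.mem_powerset, Finset.mem_powerset] at hq
    rw [Finset.mem_powerset]
    exact Finset.union_subset_union hq.1 hq.2
  · intro F hF
    rw [Finset.mem_powerset] at hF
    rw [← Finset.inter_union_distrib_left]
    exact Finset.inter_eq_left.mpr hF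
  · intro q hq
    rw [Finset.mem_product, Finset.mem_powerset, Finset.mem_powerset] at hq
    have e1 : (q.1 ∪ q.2) ∩ s = q.1 := by
      have hd : q.2 ∩ s = ∅ := Finset.disjoint_iff_inter_eq_empty.mp (hst.symm.mono_left hq.2)
      rw [Finset.union_inter_distrib_right, Finset.inter_eq_left.mpr hq.1, hd]
      exact Finset.union_empty _
    have e2 : (q.1 ∪ q.2) ∩ t = q.2 := by
      have hd : q.1 ∩ t = ∅ := Finset.disjoint_iff_inter_eq_empty.mp (hst.mono_left hq.1)
      rw [Finset.union_inter_distrib_right, Finset.inter_eq_left.mpr hq.2, hd]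
      exact Finset.empty_union _
    exact Prod.ext e1 e2
  · intro F hF
    rw [Finset.mem_powerset] at hF
    show g F = g (F ∩ s ∪ F ∩ t)
    rw [← Finset.inter_union_distrib_left, Finset.inter_eq_left.mpr hF]

/-- Multiplicativity of the Bernoulli weight over a disjoint union. -/
theorem bw_mul {p : ℝ} {s t F₁ F₂ : Finset β} (hst : Disjoint s t) (h1 : F₁ ⊆ s) (h2 : F₂ ⊆ t) :
    bw p (s ∪ t).card (F₁ ∪ F₂) = bw p s.card F₁ * bw p t.card F₂ := by
  have hd : Disjoint F₁ F₂ := hst.mono h1 h2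
  have hc : (F₁ ∪ F₂).card = F₁.card + F₂.card := Finset.card_union_of_disjoint hd
  have hst' : (s ∪ t).card = s.card + t.card := Finset.card_union_of_disjoint hst
  have h1' : F₁.card ≤ s.card := Finset.card_le_card h1
  have h2' : F₂.card ≤ t.card := Finset.card_le_card h2
  unfold bw
  rw [hc, hst', pow_add, show s.card + t.card - (F₁.card + F₂.card)
    = (s.card - F₁.card) + (t.card - F₂.card) by omega, pow_add]
  ring


end Meas

variable {V : Type*}

/-- The set of vertices reachable from the finite "active" set `A` in the graph
spanned by the edge configuration `F`. -/
def RS (F : Finset (Sym2 V)) (A : Finset V) : Set V :=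
  {x | ∃ a ∈ A, (SimpleGraph.fromEdgeSet (↑F : Set (Sym2 V))).Reachable a x}

theorem subset_RS (F : Finset (Sym2 V)) (A : Finset V) : ↑A ⊆ RS F A :=
  fun a ha => ⟨a, by simpa using ha, SimpleGraph.Reachable.refl a⟩

theorem RS_mono {F F' : Finset (Sym2 V)} (h : F' ⊆ F) (A : Finset V) :
    RS F' A ⊆ RS F A := by
  rintro x ⟨a, ha, hr⟩
  exact ⟨a, ha, hr.mono (SimpleGraph.fromEdgeSet_mono (by exact_mod_cast h))⟩

theorem walk_end {H : SimpleGraph V} {b u : V} (w : H.Walk b u) :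
    b = u ∨ ∃ y, H.Adj y u := by
  induction w with
  | nil => exact Or.inl rfl
  | cons h w ih =>
    rcases ih with rfl | hy
    · exact Or.inr ⟨_, h⟩
    · exact Or.inr hy

/-- If no edge of `F` touches `u` and `u ∉ A` then `u` is not reachable from `A`. -/
theorem not_mem_RS {F : Finset (Sym2 V)} {u : V} (hF : ∀ e ∈ F, u ∉ e) {A : Finset V}
    (hA : u ∉ A) : u ∉ RS F A := by
  rintro ⟨a, ha, hr⟩
  obtain ⟨w⟩ := hr
  rcases walk_end w with rfl | ⟨y, hy⟩
  · exact hA ha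
  · rw [SimpleGraph.fromEdgeSet_adj] at hy
    exact hF _ (by exact_mod_cast hy.1) (Sym2.mem_mk_right y u)

theorem card_le_RS [Fintype V] (F : Finset (Sym2 V)) (A : Finset V) :
    A.card ≤ (RS F A).ncard := by
  have := Set.ncard_le_ncard (subset_RS F A) (Set.toFinite _)
  simpa using this

/-- Key step inequality: exploring the active vertex `u`, with open star endpoints `S`. -/
theorem RS_step [Fintype V] [DecidableEq V] {F F' : Finset (Sym2 V)} {A S : Finset V} {u : V}
    (huA : u ∈ A) (hS : ∀ x ∈ S, u ≠ x ∧ s(u, x) ∈ F) (hF' : F' ⊆ F)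
    (hFu : ∀ e ∈ F', u ∉ e) (huS : u ∉ S) :
    (RS F' ((A.erase u) ∪ S)).ncard + 1 ≤ (RS F A).ncard := by
  set A' := (A.erase u) ∪ S with hA'
  have huA' : u ∉ A' := by
    simp only [hA', Finset.mem_union, Finset.mem_erase]
    rintro (⟨h, -⟩ | h)
    · exact h rfl
    · exact huS h
  have hnot : u ∉ RS F' A' := not_mem_RS hFu huA'
  have hsub : insert u (RS F' A') ⊆ RS F A := by
    rintro x hx
    rcases Set.mem_insert_iff.mp hx with rfl | hx
    · exact ⟨x, huA, SimpleGraph.Reachable.refl x⟩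
    · obtain ⟨a, ha, hr⟩ := hx
      have hr' : (SimpleGraph.fromEdgeSet (↑F : Set (Sym2 V))).Reachable a x :=
        hr.mono (SimpleGraph.fromEdgeSet_mono (by exact_mod_cast hF'))
      rcases Finset.mem_union.mp ha with ha | ha
      · exact ⟨a, Finset.mem_of_mem_erase ha, hr'⟩
      · refine ⟨u, huA, SimpleGraph.Reachable.trans ?_ hr'⟩
        apply SimpleGraph.Adj.reachable
        rw [SimpleGraph.fromEdgeSet_adj]
        exact ⟨by exact_mod_cast (hS a ha).2, (hS a ha).1⟩
  calc (RS F' A').ncard + 1 = (insert u (RS F' A')).ncard :=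
        (Set.ncard_insert_of_notMem hnot (Set.toFinite _)).symm
    _ ≤ (RS F A).ncard := Set.ncard_le_ncard hsub (Set.toFinite _)

section Main

variable [Fintype V] [DecidableEq V]

theorem mem_edgeFins {G : SimpleGraph V} {e : Sym2 V} : e ∈ edgeFins G ↔ e ∈ G.edgeSet :=
  Set.Finite.mem_toFinset _

open Classical in
/-- Real-valued indicator of a proposition. -/
noncomputable def indE (P : Prop) : ℝ := if P then 1 else 0

theorem indE_nonneg (P : Prop) : 0 ≤ indE P := by
  unfold indE; split <;> norm_num

theorem indE_le_one (P : Prop) : indE P ≤ 1 := by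
  unfold indE; split <;> norm_num

theorem indE_of {P : Prop} (h : P) : indE P = 1 := by
  unfold indE; rw [if_pos h]

theorem indE_mono {P Q : Prop} (h : P → Q) : indE P ≤ indE Q := by
  unfold indE
  by_cases hP : P
  · rw [if_pos hP, if_pos (h hP)]
  · rw [if_neg hP]; split <;> norm_num

/-- Probability of the event `ev` under Bernoulli(p) percolation on the edge set `E`. -/
noncomputable def PrE (p : ℝ) (E : Finset (Sym2 V)) (ev : Finset (Sym2 V) → Prop) : ℝ :=
  ∑ F ∈ E.powerset, bw p E.card F * indE (ev F)

theorem PrE_nonneg {p : ℝ} (hp0 : 0 ≤ p) (hp1 : p ≤ 1) (E : Finset (Sym2 V))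
    (ev : Finset (Sym2 V) → Prop) : 0 ≤ PrE p E ev := by
  apply Finset.sum_nonneg
  intro F _
  exact mul_nonneg (bw_nonneg hp0 hp1 _ _) (indE_nonneg _)

theorem PrE_le_one {p : ℝ} (hp0 : 0 ≤ p) (hp1 : p ≤ 1) (E : Finset (Sym2 V))
    (ev : Finset (Sym2 V) → Prop) : PrE p E ev ≤ 1 := by
  rw [← sum_bw p E]
  apply Finset.sum_le_sum
  intro F _
  have h := bw_nonneg hp0 hp1 (β := Sym2 V) (p := p) E.card F
  have h2 := indE_le_one (ev F)
  have h3 := indE_nonneg (ev F)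
  nlinarith

theorem PrE_of_true {p : ℝ} (E : Finset (Sym2 V)) {ev : Finset (Sym2 V) → Prop}
    (h : ∀ F, F ⊆ E → ev F) : PrE p E ev = 1 := by
  rw [← sum_bw p E]
  apply Finset.sum_congr rfl
  intro F hF
  rw [indE_of (h F (Finset.mem_powerset.mp hF)), mul_one]

theorem PrE_mono {p : ℝ} (hp0 : 0 ≤ p) (hp1 : p ≤ 1) (E : Finset (Sym2 V))
    {ev₁ ev₂ : Finset (Sym2 V) → Prop} (h : ∀ F, F ⊆ E → ev₁ F → ev₂ F) :
    PrE p E ev₁ ≤ PrE p E ev₂ := by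
  apply Finset.sum_le_sum
  intro F hF
  exact mul_le_mul_of_nonneg_left (indE_mono (h F (Finset.mem_powerset.mp hF)))
    (bw_nonneg hp0 hp1 _ _)

open Classical in
/-- Edges of `G` avoiding the vertex set `W`. -/
noncomputable def ER (G : SimpleGraph V) (W : Finset V) : Finset (Sym2 V) :=
  (edgeFins G).filter (fun e => ∀ x ∈ e, x ∉ W)

theorem ER_empty (G : SimpleGraph V) : ER G ∅ = edgeFins G := by
  classical
  unfold ER
  apply Finset.filter_true_of_mem
  intro e _ x _
  exact Finset.notMem_empty x

theorem mem_ER {G : SimpleGraph V} {W : Finset V} {e : Sym2 V} :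
    e ∈ ER G W ↔ e ∈ edgeFins G ∧ ∀ x ∈ e, x ∉ W := by
  classical
  unfold ER
  rw [Finset.mem_filter]

theorem nbr_card {G : SimpleGraph V} {d : ℕ} (hreg : IsRegOfDeg G d) (u : V)
    [DecidablePred fun x => G.Adj u x] :
    (Finset.univ.filter (fun x => G.Adj u x)).card = d := by
  have h := hreg u
  unfold degAt at h
  rw [← h]
  have he : {w | G.Adj u w} = ↑(Finset.univ.filter (fun x => G.Adj u x)) := by
    ext x; simp
  rw [he, Set.ncard_coe_finset]

/-- The main exploration recursion. -/
theorem explore {G : SimpleGraph V} {d k m : ℕ} {p : ℝ}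
    (hp0 : 0 ≤ p) (hp1 : p ≤ 1) (hreg : IsRegOfDeg G d) (hm : m = d - k) (hkd : k ≤ d) :
    ∀ n : ℕ, ∀ W A : Finset V, ∀ r : ℕ, Disjoint A W → W.card + A.card + r ≤ k →
      k ≤ W.card + n →
      rho p m r A.card ≤ PrE p (ER G W) (fun F => A.card + r ≤ (RS F A).ncard) := by
  classical
  intro n
  induction n with
  | zero =>
    intro W A r hdisj hcard hkn
    -- here A.card = 0 and r = 0
    have hA : A.card = 0 ∧ r = 0 := by omega
    obtain ⟨hA0, rfl⟩ := hA
    rw [PrE_of_true _ (fun F _ => by simpa [hA0] using card_le_RS F A)]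
    exact rho_le_one hp0 hp1 _ _
  | succ n ih =>
    intro W A r hdisj hcard hkn
    -- dispatch the trivial case r = 0
    rcases Nat.eq_zero_or_pos r with rfl | hr
    · rw [PrE_of_true _ (fun F _ => by simpa using card_le_RS F A)]
      exact rho_le_one hp0 hp1 _ _
    -- dispatch the trivial case A = ∅
    rcases Finset.eq_empty_or_nonempty A with rfl | hA
    · obtain ⟨r', rfl⟩ := Nat.exists_eq_succ_of_ne_zero (Nat.pos_iff_ne_zero.mp hr)
      simp only [Finset.card_empty, rho]
      exact PrE_nonneg hp0 hp1 _ _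
    obtain ⟨u, huA⟩ := hA
    obtain ⟨r', rfl⟩ := Nat.exists_eq_succ_of_ne_zero (Nat.pos_iff_ne_zero.mp hr)
    obtain ⟨a', ha'⟩ : ∃ a', A.card = a' + 1 :=
      ⟨A.card - 1, by have := Finset.card_pos.mpr ⟨u, huA⟩; omega⟩
    have huW : u ∉ W := Finset.disjoint_left.mp hdisj huA
    set W' : Finset V := insert u W with hW'
    have hW'card : W'.card = W.card + 1 := Finset.card_insert_of_notMem huW
    -- candidate neighbours
    set nbr : Finset V := Finset.univ.filter (fun x => G.Adj u x) with hnbr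
    have hnbrcard : nbr.card = d := nbr_card hreg u
    set C : Finset V := nbr \ (W ∪ A) with hC
    have hCcard : m ≤ C.card := by
      have h1 : (nbr ∩ (W ∪ A)).card ≤ W.card + A.card - 1 := by
        have h2 : nbr ∩ (W ∪ A) ⊆ (W ∪ A).erase u := by
          intro x hx
          rw [Finset.mem_inter] at hx
          rw [Finset.mem_erase]
          refine ⟨?_, hx.2⟩
          rintro rfl
          exact G.loopless.irrefl x (by simpa [hnbr] using hx.1)
        calc (nbr ∩ (W ∪ A)).card ≤ ((W ∪ A).erase u).card := Finset.card_le_card h2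
          _ = (W ∪ A).card - 1 := Finset.card_erase_of_mem (by simp [huA])
          _ ≤ W.card + A.card - 1 := by
              have := Finset.card_union_le W A
              omega
      have h3 : C.card + (nbr ∩ (W ∪ A)).card = nbr.card := by
        rw [hC]; exact Finset.card_sdiff_add_card_inter _ _
      omega
    obtain ⟨N₀, hN₀sub, hN₀card⟩ := Finset.exists_subset_card_eq hCcard
    have hN₀ : ∀ x ∈ N₀, G.Adj u x ∧ x ∉ W ∧ x ∉ A := by
      intro x hx
      have := hN₀sub hx
      rw [hC, Finset.mem_sdiff, Finset.mem_union] at this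
      refine ⟨by simpa [hnbr] using this.1, fun h => this.2 (Or.inl h), fun h => this.2 (Or.inr h)⟩
    set starN : Finset (Sym2 V) := N₀.image (fun x => s(u, x)) with hstarN
    set star1 : Finset (Sym2 V) := ((ER G W).filter (fun e => u ∈ e)) \ starN with hstar1
    set rest : Finset (Sym2 V) := ER G W' with hrestdef
    have hstarNsub : starN ⊆ (ER G W).filter (fun e => u ∈ e) := by
      intro e he
      rw [hstarN, Finset.mem_image] at he
      obtain ⟨x, hx, rfl⟩ := he
      obtain ⟨hadj, hxW, -⟩ := hN₀ x hx
      rw [Finset.mem_filter, mem_ER]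
      refine ⟨⟨mem_edgeFins.mpr hadj, ?_⟩, Sym2.mem_mk_left u x⟩
      intro z hz
      rcases Sym2.mem_iff.mp hz with rfl | rfl
      · exact huW
      · exact hxW
    have hstarNcard : starN.card = m := by
      rw [hstarN, Finset.card_image_of_injOn, hN₀card]
      intro x _ y _ hxy
      exact Sym2.congr_right.mp hxy
    have hrest_eq : rest = (ER G W).filter (fun e => u ∉ e) := by
      ext e
      rw [hrestdef, mem_ER, Finset.mem_filter, mem_ER]
      constructor
      · rintro ⟨h1, h2⟩
        exact ⟨⟨h1, fun x hx hxW => h2 x hx (Finset.mem_insert_of_mem hxW)⟩,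
          fun hu => h2 u hu (Finset.mem_insert_self u W)⟩
      · rintro ⟨⟨h1, h2⟩, h3⟩
        refine ⟨h1, fun x hx hxW' => ?_⟩
        rcases Finset.mem_insert.mp hxW' with rfl | hxW
        · exact h3 hx
        · exact h2 x hx hxW
    have hsplit : ER G W = starN ∪ (star1 ∪ rest) := by
      rw [← Finset.union_assoc, hstar1, Finset.union_sdiff_of_subset hstarNsub, hrest_eq]
      exact (Finset.filter_union_filter_not_eq _ (ER G W)).symm
    have hd2 : Disjoint star1 rest := by
      refine Finset.disjoint_left.mpr fun e he hre => ?_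
      have h1 : u ∈ e := (Finset.mem_filter.mp (Finset.mem_sdiff.mp he).1).2
      rw [hrest_eq] at hre
      exact (Finset.mem_filter.mp hre).2 h1
    have hd1 : Disjoint starN (star1 ∪ rest) := by
      rw [Finset.disjoint_union_right]
      constructor
      · exact Finset.disjoint_sdiff
      · refine Finset.disjoint_left.mpr ?_
        intro e he hre
        rw [hrest_eq, Finset.mem_filter] at hre
        exact hre.2 ((Finset.mem_filter.mp (hstarNsub he)).2)
    -- expand the sum
    have expand : PrE p (ER G W) (fun F => A.card + (r' + 1) ≤ (RS F A).ncard)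
        = ∑ F₀ ∈ starN.powerset, ∑ F₁ ∈ star1.powerset, ∑ F' ∈ rest.powerset,
            bw p (ER G W).card (F₀ ∪ (F₁ ∪ F')) *
              indE (A.card + (r' + 1) ≤ (RS (F₀ ∪ (F₁ ∪ F')) A).ncard) := by
      unfold PrE
      rw [show (ER G W).powerset = (starN ∪ (star1 ∪ rest)).powerset by rw [← hsplit]]
      rw [sum_powerset_disjUnion _ _ hd1]
      apply Finset.sum_congr rfl
      intro F₀ _
      rw [sum_powerset_disjUnion _ _ hd2]
    rw [expand]
    -- per-term lower bound
    have key : ∀ F₀ ∈ starN.powerset, ∀ F₁ ∈ star1.powerset,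
        bw p starN.card F₀ * bw p star1.card F₁ *
            rho p m ((r' + 1) - F₀.card) (a' + F₀.card)
          ≤ ∑ F' ∈ rest.powerset, bw p (ER G W).card (F₀ ∪ (F₁ ∪ F')) *
              indE (A.card + (r' + 1) ≤ (RS (F₀ ∪ (F₁ ∪ F')) A).ncard) := by
      intro F₀ hF₀ F₁ hF₁
      rw [Finset.mem_powerset] at hF₀ hF₁
      set Sfin : Finset V := Finset.univ.filter (fun x => s(u, x) ∈ F₀ ∪ F₁) with hSfin
      set s : ℕ := (Sfin \ A).card with hs
      set A' : Finset V := A.erase u ∪ (Sfin \ A) with hA'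
      have hSprop : ∀ F' : Finset (Sym2 V), ∀ x ∈ Sfin, u ≠ x ∧ s(u, x) ∈ F₀ ∪ (F₁ ∪ F') := by
        intro F' x hx
        rw [hSfin, Finset.mem_filter] at hx
        have hmem : s(u, x) ∈ F₀ ∪ (F₁ ∪ F') := by
          rcases Finset.mem_union.mp hx.2 with h | h
          · exact Finset.mem_union_left _ h
          · exact Finset.mem_union_right _ (Finset.mem_union_left _ h)
        refine ⟨?_, hmem⟩
        rintro rfl
        have hE : s(u, u) ∈ ER G W := by
          rcases Finset.mem_union.mp hx.2 with h | h
          · exact Finset.mem_filter.mp (hstarNsub (hF₀ h)) |>.1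
          · exact Finset.mem_filter.mp (Finset.sdiff_subset (hF₁ h)) |>.1
        have := (mem_ER.mp hE).1
        rw [mem_edgeFins, SimpleGraph.mem_edgeSet] at this
        exact G.loopless.irrefl u this
      have huSfin : u ∉ Sfin := by
        intro h
        exact (hSprop ∅ u h).1 rfl
      have hA'card : A'.card = a' + s := by
        rw [hA', Finset.card_union_of_disjoint, Finset.card_erase_of_mem huA, ha']
        · omega
        · refine Finset.disjoint_left.mpr fun x hx hx2 => ?_
          exact (Finset.mem_sdiff.mp hx2).2 (Finset.mem_of_mem_erase hx)
      have hA'disj : Disjoint A' W' := by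
        rw [hA', Finset.disjoint_union_left]
        constructor
        · rw [hW', Finset.disjoint_insert_right]
          exact ⟨fun h => (Finset.mem_erase.mp h).1 rfl,
            hdisj.mono_left (Finset.erase_subset u A)⟩
        · refine Finset.disjoint_left.mpr fun x hx hxW' => ?_
          obtain ⟨hxS, -⟩ := Finset.mem_sdiff.mp hx
          rw [hSfin, Finset.mem_filter] at hxS
          have hE : s(u, x) ∈ ER G W := by
            rcases Finset.mem_union.mp hxS.2 with h | h
            · exact Finset.mem_filter.mp (hstarNsub (hF₀ h)) |>.1
            · exact Finset.mem_filter.mp (Finset.sdiff_subset (hF₁ h)) |>.1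
          rcases Finset.mem_insert.mp hxW' with rfl | hxW
          · exact huSfin (by rw [hSfin, Finset.mem_filter]; exact hxS)
          · exact (mem_ER.mp hE).2 x (Sym2.mem_mk_right u x) hxW
      -- event implication
      have himp : ∀ F' ∈ rest.powerset,
          (A'.card + ((r' + 1) - s) ≤ (RS F' A').ncard) →
          (A.card + (r' + 1) ≤ (RS (F₀ ∪ (F₁ ∪ F')) A).ncard) := by
        intro F' hF' hev
        rw [Finset.mem_powerset] at hF'
        have hstep := RS_step (F := F₀ ∪ (F₁ ∪ F')) (F' := F') (A := A) (S := Sfin)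
          huA (fun x hx => hSprop F' x hx) (fun e he => Finset.mem_union_right _
            (Finset.mem_union_right _ he)) ?_ huSfin
        · have hAeq : A.erase u ∪ Sfin = A' := by
            rw [hA']
            apply Finset.Subset.antisymm
            · intro x hx
              rcases Finset.mem_union.mp hx with h | h
              · exact Finset.mem_union_left _ h
              · by_cases hxA : x ∈ A
                · refine Finset.mem_union_left _ (Finset.mem_erase.mpr ⟨?_, hxA⟩)
                  rintro rfl
                  exact huSfin h
                · exact Finset.mem_union_right _ (Finset.mem_sdiff.mpr ⟨h, hxA⟩)
            · intro x hx
              rcases Finset.mem_union.mp hx with h | h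
              · exact Finset.mem_union_left _ h
              · exact Finset.mem_union_right _ (Finset.mem_sdiff.mp h).1
          rw [hAeq] at hstep
          have : A'.card + ((r' + 1) - s) + 1 ≤ (RS (F₀ ∪ (F₁ ∪ F')) A).ncard := by omega
          rw [hA'card] at this
          have hineq : A.card + (r' + 1) ≤ a' + s + ((r' + 1) - s) + 1 := by omega
          omega
        · intro e he
          have : e ∈ rest := hF' he
          rw [hrest_eq, Finset.mem_filter] at this
          exact this.2
      -- weight splitting
      have hbw : ∀ F' ∈ rest.powerset, bw p (ER G W).card (F₀ ∪ (F₁ ∪ F'))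
          = bw p starN.card F₀ * (bw p star1.card F₁ * bw p rest.card F') := by
        intro F' hF'
        rw [Finset.mem_powerset] at hF'
        rw [show (ER G W).card = (starN ∪ (star1 ∪ rest)).card by rw [← hsplit]]
        rw [bw_mul hd1 hF₀ (Finset.union_subset_union hF₁ hF'),
          bw_mul hd2 hF₁ hF']
      -- lower bound via the inner percolation probability
      have hj : F₀.card ≤ s := by
        have hsb : N₀.filter (fun x => s(u, x) ∈ F₀) ⊆ Sfin \ A := by
          intro x hx
          rw [Finset.mem_filter] at hx
          rw [Finset.mem_sdiff, hSfin, Finset.mem_filter]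
          exact ⟨⟨Finset.mem_univ x, Finset.mem_union_left _ hx.2⟩, (hN₀ x hx.1).2.2⟩
        have hcardeq : (N₀.filter (fun x => s(u, x) ∈ F₀)).card = F₀.card := by
          apply le_antisymm
          · rw [← Finset.card_image_of_injOn (f := fun x => s(u, x))]
            · apply Finset.card_le_card
              intro e he
              rw [Finset.mem_image] at he
              obtain ⟨x, hx, rfl⟩ := he
              exact (Finset.mem_filter.mp hx).2
            · intro x _ y _ hxy
              exact Sym2.congr_right.mp hxy
          · -- F₀ ⊆ image of the filter
            rw [← Finset.card_image_of_injOn (f := fun x => s(u, x))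
              (fun x _ y _ hxy => Sym2.congr_right.mp hxy)]
            apply Finset.card_le_card
            intro e he
            have heN : e ∈ starN := hF₀ he
            rw [hstarN, Finset.mem_image] at heN
            obtain ⟨x, hx, rfl⟩ := heN
            rw [Finset.mem_image]
            exact ⟨x, Finset.mem_filter.mpr ⟨hx, he⟩, rfl⟩
        calc F₀.card = (N₀.filter (fun x => s(u, x) ∈ F₀)).card := hcardeq.symm
          _ ≤ (Sfin \ A).card := Finset.card_le_card hsb
          _ = s := rfl
      have hrho1 : rho p m ((r' + 1) - F₀.card) (a' + F₀.card)
          ≤ rho p m ((r' + 1) - s) (a' + s) :=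
        rho_sub_shift hp0 hp1 (r' + 1) a' F₀.card s hj
      have hrho2 : rho p m ((r' + 1) - s) A'.card ≤ PrE p rest
          (fun F' => A'.card + ((r' + 1) - s) ≤ (RS F' A').ncard) := by
        rcases le_or_gt (r' + 1) s with hle | hlt
        · rw [Nat.sub_eq_zero_of_le hle]
          rw [PrE_of_true _ (fun F' _ => by simpa using card_le_RS F' A')]
          exact rho_le_one hp0 hp1 _ _
        · apply ih W' A' ((r' + 1) - s) hA'disj
          · rw [hW'card, hA'card]
            omega
          · omega
      calc bw p starN.card F₀ * bw p star1.card F₁ *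
              rho p m ((r' + 1) - F₀.card) (a' + F₀.card)
          ≤ bw p starN.card F₀ * bw p star1.card F₁ *
              (PrE p rest (fun F' => A'.card + ((r' + 1) - s) ≤ (RS F' A').ncard)) := by
            apply mul_le_mul_of_nonneg_left _
              (mul_nonneg (bw_nonneg hp0 hp1 _ _) (bw_nonneg hp0 hp1 _ _))
            refine le_trans ?_ hrho2
            rw [hA'card]
            exact hrho1
        _ ≤ ∑ F' ∈ rest.powerset, bw p (ER G W).card (F₀ ∪ (F₁ ∪ F')) *
              indE (A.card + (r' + 1) ≤ (RS (F₀ ∪ (F₁ ∪ F')) A).ncard) := by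
            unfold PrE
            rw [Finset.mul_sum]
            apply Finset.sum_le_sum
            intro F' hF'
            dsimp only
            rw [hbw F' hF']
            have h1 := bw_nonneg hp0 hp1 (β := Sym2 V) (p := p) starN.card F₀
            have h2 := bw_nonneg hp0 hp1 (β := Sym2 V) (p := p) star1.card F₁
            have h3 := bw_nonneg hp0 hp1 (β := Sym2 V) (p := p) rest.card F'
            have hind : indE (A'.card + ((r' + 1) - s) ≤ (RS F' A').ncard)
                ≤ indE (A.card + (r' + 1) ≤ (RS (F₀ ∪ (F₁ ∪ F')) A).ncard) :=
              indE_mono (himp F' hF')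
            have hB : (0:ℝ) ≤ bw p starN.card F₀ * bw p star1.card F₁ * bw p rest.card F' := by
              positivity
            nlinarith [mul_le_mul_of_nonneg_left hind hB]
    -- assemble
    calc rho p m (r' + 1) A.card
        = ∑ j ∈ Finset.range (m + 1), gwB p m j * rho p m (r' + 1 - j) (a' + j) := by
          rw [ha', rho_succ_succ]
      _ = ∑ F₀ ∈ starN.powerset, bw p starN.card F₀ *
            rho p m ((r' + 1) - F₀.card) (a' + F₀.card) := by
          rw [sum_bw_card p starN (fun j => rho p m ((r' + 1) - j) (a' + j)), hstarNcard]
      _ = ∑ F₀ ∈ starN.powerset, ∑ F₁ ∈ star1.powerset, bw p starN.card F₀ *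
            bw p star1.card F₁ * rho p m ((r' + 1) - F₀.card) (a' + F₀.card) := by
          apply Finset.sum_congr rfl
          intro F₀ _
          rw [← Finset.sum_mul, ← Finset.mul_sum]
          rw [show ∑ F₁ ∈ star1.powerset, bw p star1.card F₁ = 1 from sum_bw p star1]
          ring
      _ ≤ ∑ F₀ ∈ starN.powerset, ∑ F₁ ∈ star1.powerset, ∑ F' ∈ rest.powerset,
            bw p (ER G W).card (F₀ ∪ (F₁ ∪ F')) *
              indE (A.card + (r' + 1) ≤ (RS (F₀ ∪ (F₁ ∪ F')) A).ncard) := by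
          apply Finset.sum_le_sum
          intro F₀ hF₀
          apply Finset.sum_le_sum
          intro F₁ hF₁
          exact key F₀ hF₀ F₁ hF₁

end Main
-- === analysis lemmas ===

/-- Strict concavity gap: if `y` is a positive fixed point of `t ↦ 1 - exp (-c t)` then any
`w ∈ (0, y)` lies strictly below the curve. -/
theorem fixedpoint_gap {c y w : ℝ} (hc : 0 < c) (hy0 : 0 < y)
    (hgy : y = 1 - Real.exp (-c * y)) (hw0 : 0 < w) (hwy : w < y) :
    w < 1 - Real.exp (-c * w) := by
  have hyne : y ≠ 0 := ne_of_gt hy0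
  have hb0 : 0 < w / y := div_pos hw0 hy0
  have hb1 : w / y < 1 := (div_lt_one hy0).mpr hwy
  have ha0 : 0 < 1 - w / y := by linarith
  have hne : (0:ℝ) ≠ -c * y := by nlinarith
  have h := strictConvexOn_exp.2 (Set.mem_univ (0:ℝ)) (Set.mem_univ (-c * y)) hne ha0 hb0
    (by ring)
  simp only [smul_eq_mul, mul_zero, Real.exp_zero, mul_one, zero_add] at h
  have he : w / y * (-c * y) = -c * w := by field_simp
  rw [he] at h
  have hey : Real.exp (-c * y) = 1 - y := by linarith
  rw [hey] at h
  have : (1 - w / y) + w / y * (1 - y) = 1 - w := by field_simp; ring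
  linarith [this ▸ h]

/-- Uniqueness of the fixed point in `(0,1)`. -/
theorem fixedpoint_unique {c y₁ y₂ : ℝ} (hc : 0 < c) (h10 : 0 < y₁) (h20 : 0 < y₂)
    (he1 : y₁ = 1 - Real.exp (-c * y₁)) (he2 : y₂ = 1 - Real.exp (-c * y₂)) : y₁ = y₂ := by
  by_contra hne
  rcases lt_or_gt_of_ne hne with h | h
  · exact absurd he1 (ne_of_lt (fixedpoint_gap hc h20 he2 h10 h))
  · exact absurd he2 (ne_of_lt (fixedpoint_gap hc h10 he1 h20 h))

-- === final theorem ===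


set_option maxHeartbeats 1000000 in
/-- for large `d`, in any `d`-regular graph with `(1+ε)/d ≤ p ≤ 1` the
probability that a fixed vertex lies in a component of order at least `d^{1/2}` is at
least `y(ε) - δ`. -/
theorem stmt_15 (ε : ℝ) (hε : 0 < ε) (δ : ℝ) (hδ : 0 < δ) :
    ∃ d₀ : ℕ, ∀ d : ℕ, d₀ ≤ d →
      ∀ (V : Type) [Fintype V] (G : SimpleGraph V), IsRegOfDeg G d →
      ∀ v : V, ∀ p : ℝ, (1 + ε) / (d : ℝ) ≤ p → p ≤ 1 →
      ∀ y : ℝ, 0 < y → y < 1 → y = 1 - Real.exp (-(1 + ε) * y) →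
      y - δ ≤ percProb G p
        (fun H => (d : ℝ) ^ ((1 : ℝ) / 2) ≤ (compCard H v : ℝ)) := by
  by_cases hex : ∃ y₀ : ℝ, 0 < y₀ ∧ y₀ < 1 ∧ y₀ = 1 - Real.exp (-(1 + ε) * y₀)
  swap
  · refine ⟨0, ?_⟩
    intro d _ V _ G _ v p _ _ y hy0 hy1 hyeq
    exact absurd ⟨y, hy0, hy1, hyeq⟩ hex
  obtain ⟨y₀, hy₀0, hy₀1, hy₀eq⟩ := hex
  have hc : (0:ℝ) < 1 + ε := by linarith
  -- the target level w and the gap η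
  obtain ⟨w, hwdef⟩ : ∃ w : ℝ, w = y₀ - min (δ / 2) (y₀ / 2) := ⟨_, rfl⟩
  have hw0 : 0 < w := by
    have h1 : min (δ / 2) (y₀ / 2) ≤ y₀ / 2 := min_le_right _ _
    rw [hwdef]; linarith
  have hwy : w < y₀ := by
    have h1 : 0 < min (δ / 2) (y₀ / 2) := lt_min (by linarith) (by linarith)
    rw [hwdef]; linarith
  have hw1 : w < 1 := lt_trans hwy hy₀1
  have hgap : w < 1 - Real.exp (-(1 + ε) * w) :=
    fixedpoint_gap hc hy₀0 hy₀eq hw0 hwy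
  obtain ⟨η, hηdef⟩ : ∃ η : ℝ, η = 1 - Real.exp (-(1 + ε) * w) - w := ⟨_, rfl⟩
  have hη0 : 0 < η := by rw [hηdef]; linarith
  have hexpw : Real.exp (-(1 + ε) * w) = 1 - w - η := by rw [hηdef]; ring
  have h1wη : 0 < 1 - w - η := by rw [← hexpw]; exact Real.exp_pos _
  obtain ⟨L, hLdef⟩ : ∃ L : ℝ, L = Real.log ((1 - w) / (1 - w - η)) := ⟨_, rfl⟩
  have hL0 : 0 < L := by
    rw [hLdef]
    apply Real.log_pos
    rw [lt_div_iff₀ h1wη]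
    linarith
  -- choose d₀
  obtain ⟨M, hMdef⟩ : ∃ M : ℕ, M = ⌈2 * (1 + ε) / L⌉₊ + 1 := ⟨_, rfl⟩
  refine ⟨max (M * M) 3, fun d hd V _ G hreg v p hp hp1 y hy0 hy1 hyeq => ?_⟩
  classical
  have hd3 : 3 ≤ d := le_trans (le_max_right _ _) hd
  have hdM : M * M ≤ d := le_trans (le_max_left _ _) hd
  -- identify y with y₀
  have hyy : y = y₀ := fixedpoint_unique hc hy0 hy₀0 hyeq hy₀eq
  subst hyy
  set k : ℕ := Nat.sqrt d + 1 with hk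
  have hkd : k ≤ d := by
    have h1 : Nat.sqrt d < d := Nat.sqrt_lt_self (by omega)
    omega
  set m : ℕ := d - k with hm
  have hdpos : (0:ℝ) < (d:ℝ) := by
    have : 0 < d := by omega
    exact_mod_cast this
  have hp0 : 0 ≤ p := le_trans (div_nonneg hc.le hdpos.le) hp
  obtain ⟨z, hzdef⟩ : ∃ z : ℝ, z = 1 - w := ⟨_, rfl⟩
  have hz0 : 0 ≤ z := by rw [hzdef]; linarith
  have hz1 : z ≤ 1 := by rw [hzdef]; linarith
  -- the main numeric inequality: (1 - p + p z)^m ≤ z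
  have hkL : (1 + ε) * (k:ℝ) / (d:ℝ) ≤ L := by
    have hsM : M ≤ Nat.sqrt d := by
      have h0 : Nat.sqrt (M * M) = M := by
        have := Nat.sqrt_eq' M
        rwa [pow_two] at this
      calc M = Nat.sqrt (M * M) := h0.symm
        _ ≤ Nat.sqrt d := Nat.sqrt_le_sqrt hdM
    have hS1 : (1:ℝ) ≤ (Nat.sqrt d : ℝ) := by
      have h1 : 1 ≤ Nat.sqrt d := by
        have h2 := Nat.sqrt_le_sqrt (show 1 ≤ d by omega)
        simpa using h2
      exact_mod_cast h1
    have hSM : 2 * (1 + ε) / L ≤ (Nat.sqrt d : ℝ) := by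
      have h1 : (2 * (1 + ε) / L) ≤ (M:ℝ) := by
        have h3 := Nat.le_ceil (2 * (1 + ε) / L)
        have h2 : ((⌈2 * (1 + ε) / L⌉₊ : ℕ) : ℝ) ≤ (M:ℝ) := by
          rw [hMdef]; push_cast; linarith
        linarith
      have h2 : (M:ℝ) ≤ (Nat.sqrt d : ℝ) := by exact_mod_cast hsM
      linarith
    have hk2S : (k:ℝ) ≤ 2 * (Nat.sqrt d : ℝ) := by
      have h1 : (k:ℝ) = (Nat.sqrt d : ℝ) + 1 := by rw [hk]; push_cast; ring
      linarith
    have hdS : (Nat.sqrt d : ℝ) * (Nat.sqrt d : ℝ) ≤ (d:ℝ) := by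
      have h1 : Nat.sqrt d * Nat.sqrt d ≤ d := by
        have h2 := Nat.sqrt_le' d
        rwa [pow_two] at h2
      exact_mod_cast h1
    have hLS : 2 * (1 + ε) ≤ L * (Nat.sqrt d : ℝ) := by
      calc 2 * (1 + ε) = L * (2 * (1 + ε) / L) := by field_simp
        _ ≤ L * (Nat.sqrt d : ℝ) := mul_le_mul_of_nonneg_left hSM hL0.le
    rw [div_le_iff₀ hdpos]
    calc (1 + ε) * (k:ℝ) ≤ (1 + ε) * (2 * (Nat.sqrt d : ℝ)) := by nlinarith
      _ = (2 * (1 + ε)) * (Nat.sqrt d : ℝ) := by ring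
      _ ≤ (L * (Nat.sqrt d : ℝ)) * (Nat.sqrt d : ℝ) := by nlinarith
      _ = L * ((Nat.sqrt d : ℝ) * (Nat.sqrt d : ℝ)) := by ring
      _ ≤ L * (d:ℝ) := by nlinarith
  have hmd : (m:ℝ) = (d:ℝ) - (k:ℝ) := by
    rw [hm, Nat.cast_sub hkd]
  have hz2 : (1 - p + p * z) ^ m ≤ z := by
    have e1 : 1 - p + p * z = 1 - p * w := by rw [hzdef]; ring
    rw [e1]
    have hpw0 : 0 ≤ p * w := mul_nonneg hp0 hw0.le
    have hpw1 : p * w ≤ 1 := by nlinarith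
    have step1 : (1 - p * w) ^ m ≤ Real.exp (-(p * w * m)) := by
      have hb : 1 - p * w ≤ Real.exp (-(p * w)) := by
        have := Real.add_one_le_exp (-(p * w))
        linarith
      calc (1 - p * w) ^ m ≤ (Real.exp (-(p * w))) ^ m :=
            pow_le_pow_left₀ (by linarith) hb m
        _ = Real.exp (-(p * w) * m) := by
            rw [← Real.exp_nat_mul]
            ring_nf
        _ = Real.exp (-(p * w * m)) := by ring_nf
    have step2 : Real.exp (-(p * w * m)) ≤ Real.exp (-((1 + ε) / d * w * m)) := by
      apply Real.exp_le_exp.mpr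
      have : (1 + ε) / d * w * (m:ℝ) ≤ p * w * m := by
        apply mul_le_mul_of_nonneg_right _ (Nat.cast_nonneg m)
        exact mul_le_mul_of_nonneg_right hp hw0.le
      linarith
    have step3 : -((1 + ε) / d * w * m) = -(1 + ε) * w + (1 + ε) * w * k / d := by
      rw [hmd]
      field_simp
      ring
    have step4 : Real.exp (-((1 + ε) / d * w * m)) ≤ z := by
      rw [step3, Real.exp_add, hexpw]
      have h5 : Real.exp ((1 + ε) * w * k / d) ≤ Real.exp L := by
        apply Real.exp_le_exp.mpr
        refine le_trans ?_ hkL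
        rw [div_le_div_iff₀ hdpos hdpos]
        have hk0 : (0:ℝ) ≤ (k:ℝ) := Nat.cast_nonneg k
        nlinarith [mul_nonneg (mul_nonneg hc.le hk0) hdpos.le]
      have h6 : Real.exp L = (1 - w) / (1 - w - η) := by
        rw [hLdef]
        exact Real.exp_log (div_pos (by linarith) h1wη)
      calc (1 - w - η) * Real.exp ((1 + ε) * w * k / d)
          ≤ (1 - w - η) * Real.exp L := mul_le_mul_of_nonneg_left h5 h1wη.le
        _ = (1 - w - η) * ((1 - w) / (1 - w - η)) := by rw [h6]
        _ = 1 - w := by field_simp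
        _ = z := hzdef.symm
    calc (1 - p * w) ^ m ≤ Real.exp (-(p * w * m)) := step1
      _ ≤ Real.exp (-((1 + ε) / d * w * m)) := step2
      _ ≤ z := step4
  -- lower bound for rho
  have hrho : w ≤ rho p m (k - 1) 1 := by
    have := rho_tail hp0 hp1 hz0 hz1 hz2 (k - 1) 1
    rw [pow_one] at this
    rw [hzdef] at this
    linarith
  -- exploration bound
  have hexplore := explore hp0 hp1 hreg hm hkd k ∅ {v} (k - 1)
    (Finset.disjoint_empty_right _)
    (by simp only [Finset.card_empty, Finset.card_singleton]; omega)
    (by simp only [Finset.card_empty]; omega)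
  rw [ER_empty, Finset.card_singleton] at hexplore
  -- convert to percProb
  have hPP : percProb G p (fun H => (d : ℝ) ^ ((1 : ℝ) / 2) ≤ (compCard H v : ℝ))
      = PrE p (edgeFins G)
        (fun F => (d : ℝ) ^ ((1 : ℝ) / 2) ≤ (compCard (SimpleGraph.fromEdgeSet (↑F)) v : ℝ)) := by
    unfold percProb PrE bw indE
    apply Finset.sum_congr rfl
    intro F _
    rw [mul_ite, mul_one, mul_zero]
  have hmono : PrE p (edgeFins G) (fun F => 1 + (k - 1) ≤ (RS F {v}).ncard)
      ≤ PrE p (edgeFins G)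
        (fun F => (d : ℝ) ^ ((1 : ℝ) / 2) ≤ (compCard (SimpleGraph.fromEdgeSet (↑F)) v : ℝ)) := by
    apply PrE_mono hp0 hp1
    intro F _ hev
    have hcc : compCard (SimpleGraph.fromEdgeSet (↑F : Set (Sym2 V))) v = (RS F {v}).ncard := by
      unfold compCard RS
      congr 1
      ext x
      simp
    have hkcc : (k:ℝ) ≤ (compCard (SimpleGraph.fromEdgeSet (↑F : Set (Sym2 V))) v : ℝ) := by
      rw [hcc]
      have : k ≤ (RS F {v}).ncard := by omega
      exact_mod_cast this
    have hsq : (d : ℝ) ^ ((1 : ℝ) / 2) ≤ (k:ℝ) := by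
      have h1 : (d : ℝ) ^ ((1 : ℝ) / 2) = Real.sqrt d := (Real.sqrt_eq_rpow (d:ℝ)).symm
      rw [h1]
      have h2 : (d:ℝ) ≤ (k:ℝ) * (k:ℝ) := by
        have h4 := Nat.lt_succ_sqrt' d
        simp only [Nat.succ_eq_add_one, pow_two] at h4
        have h3 : d ≤ k * k := by rw [hk]; omega
        exact_mod_cast h3
      calc Real.sqrt d ≤ Real.sqrt ((k:ℝ) * (k:ℝ)) := Real.sqrt_le_sqrt h2
        _ = (k:ℝ) := Real.sqrt_mul_self (Nat.cast_nonneg k)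
    linarith
  have hwyδ : y - δ ≤ w := by
    have h1 : min (δ / 2) (y / 2) ≤ δ / 2 := min_le_left _ _
    rw [hwdef]
    linarith
  calc y - δ ≤ w := hwyδ
    _ ≤ rho p m (k - 1) 1 := hrho
    _ ≤ PrE p (edgeFins G) (fun F => 1 + (k - 1) ≤ (RS F {v}).ncard) := hexplore
    _ ≤ PrE p (edgeFins G)
        (fun F => (d : ℝ) ^ ((1 : ℝ) / 2) ≤ (compCard (SimpleGraph.fromEdgeSet (↑F)) v : ℝ)) := hmono
    _ = percProb G p (fun H => (d : ℝ) ^ ((1 : ℝ) / 2) ≤ (compCard H v : ℝ)) := hPP.symm
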